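/- For every ρ ∈ (0, 1/3) with 1/ρ − ⌊1/ρ⌋ > 1/2 there exists ε(ρ) > 0 such that for every N₀ ∈ ℕ there exists a connected graph G of order n ≥ N₀ with h_ρ(G) > (1 + ε)ρn. -/

import Mathlib

open Finset
open scoped Classical

variable {V : Type*}

/-- One step of the bootstrap percolation process in `G` with thresholds `φ`. -/
noncomputable def percStep [Fintype V] (G : SimpleGraph V) (φ : V → ℝ) (A : Finset V) :
    Finset V :=
  A ∪ Finset.univ.filter fun v => φ v ≤ ((A.filter fun u => G.Adj v u).card : ℝ)

/-- `A` is a contagious set for `G` with respect to thresholds `φ`. -/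
def Contagious [Fintype V] (G : SimpleGraph V) (φ : V → ℝ) (A : Finset V) : Prop :=
  ∃ k, (percStep G φ)^[k] A = Finset.univ

/-- The final infected set `H_{φ,G}(A)`. -/
noncomputable def percClosure [Fintype V] (G : SimpleGraph V) (φ : V → ℝ) (A : Finset V) :
    Finset V :=
  (percStep G φ)^[Fintype.card V] A

/-- `h_ρ(G)`: minimum size of a contagious set for ratio `ρ`. -/
noncomputable def minContagious [Fintype V] (G : SimpleGraph V) (ρ : ℝ) : ℕ :=
  sInf {k | ∃ A : Finset V, A.card = k ∧ Contagious G (fun v => ρ * (G.degree v : ℝ)) A}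

def pairRel (m p q : ℕ) : Prop :=
  (p < m ∧ q < 2*m) ∨ (q < m ∧ p < 2*m) ∨ (p = 2*m ∧ m ≤ q ∧ q < 2*m) ∨
    (q = 2*m ∧ m ≤ p ∧ p < 2*m)

lemma pairRel_symm {m p q : ℕ} (h : pairRel m p q) : pairRel m q p := by
  unfold pairRel at *; tauto

def gRel (m k x y : ℕ) : Prop :=
  (x < k*(2*m+1) ∧ y < k*(2*m+1) ∧ x/(2*m+1) = y/(2*m+1) ∧
    pairRel m (x % (2*m+1)) (y % (2*m+1)))
  ∨ (x = k*(2*m+1) ∧ y < k*(2*m+1) ∧ y % (2*m+1) = 2*m)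
  ∨ (y = k*(2*m+1) ∧ x < k*(2*m+1) ∧ x % (2*m+1) = 2*m)

lemma gRel_symm {m k x y : ℕ} (h : gRel m k x y) : gRel m k y x := by
  unfold gRel at *
  rcases h with ⟨h1,h2,h3,h4⟩ | h | h
  · exact Or.inl ⟨h2, h1, h3.symm, pairRel_symm h4⟩
  · exact Or.inr (Or.inr h)
  · exact Or.inr (Or.inl h)

def GG (m k : ℕ) : SimpleGraph (Fin (k*(2*m+1)+1)) where
  Adj x y := x ≠ y ∧ gRel m k x.val y.val
  symm := ⟨fun _ _ ⟨hne, hr⟩ => ⟨hne.symm, gRel_symm hr⟩⟩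
  loopless := ⟨fun x h => h.1 rfl⟩

section basic
variable {m k : ℕ}

/-- code of the vertex at position `r` of gadget `g` lies in range -/
lemma code_lt {g r : ℕ} (hg : g < k) (hr : r < 2*m+1) : g*(2*m+1)+r < k*(2*m+1) := by
  calc g*(2*m+1)+r < g*(2*m+1) + (2*m+1) := by omega
  _ = (g+1)*(2*m+1) := by ring
  _ ≤ k*(2*m+1) := Nat.mul_le_mul_right _ hg

lemma code_div {g r : ℕ} (hr : r < 2*m+1) : (g*(2*m+1)+r)/(2*m+1) = g := by
  rw [Nat.add_comm, Nat.add_mul_div_right _ _ (by omega : 0 < 2*m+1), Nat.div_eq_of_lt hr]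
  omega

lemma code_mod {g r : ℕ} (hr : r < 2*m+1) : (g*(2*m+1)+r) % (2*m+1) = r := by
  rw [Nat.mul_add_mod']
  exact Nat.mod_eq_of_lt hr

end basic

section adj
variable {m k : ℕ}

lemma adj_code {g p q : ℕ} (hg : g < k) (hp : p < 2*m+1) (hq : q < 2*m+1) (hne : p ≠ q)
    (hpq : pairRel m p q) :
    (GG m k).Adj ⟨g*(2*m+1)+p, by have := code_lt hg hp; omega⟩
      ⟨g*(2*m+1)+q, by have := code_lt hg hq; omega⟩ := by
  constructor
  · simp only [Ne, Fin.mk.injEq]; omega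
  · exact Or.inl ⟨code_lt hg hp, code_lt hg hq, by rw [code_div hp, code_div hq],
      by rw [code_mod hp, code_mod hq]; exact hpq⟩

lemma adj_hub {g : ℕ} (hg : g < k) :
    (GG m k).Adj ⟨k*(2*m+1), by omega⟩
      ⟨g*(2*m+1)+2*m, by have := code_lt hg (by omega : 2*m < 2*m+1); omega⟩ := by
  have hlt := code_lt (m := m) hg (by omega : 2*m < 2*m+1)
  refine ⟨?_, Or.inr (Or.inl ⟨rfl, hlt, code_mod (by omega)⟩)⟩
  simp only [Ne, Fin.mk.injEq]; omega

/-- structure of neighbors of a gadget vertex -/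
lemma adj_struct {v w : Fin (k*(2*m+1)+1)} (hv : v.val < k*(2*m+1))
    (hadj : (GG m k).Adj v w) :
    (w.val = k*(2*m+1) ∧ v.val % (2*m+1) = 2*m) ∨
    (w.val < k*(2*m+1) ∧ w.val/(2*m+1) = v.val/(2*m+1) ∧
      pairRel m (v.val % (2*m+1)) (w.val % (2*m+1))) := by
  rcases hadj.2 with ⟨_, h2, h3, h4⟩ | ⟨h1, _, _⟩ | ⟨h1, _, h3⟩
  · exact Or.inr ⟨h2, h3.symm, h4⟩
  · omega
  · exact Or.inl ⟨h1, h3⟩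
end adj

section deg
variable {m k : ℕ}

lemma deg_ge (hm : 2 ≤ m) {v : Fin (k*(2*m+1)+1)} (hv : v.val < k*(2*m+1)) :
    m+1 ≤ (GG m k).degree v := by
  classical
  obtain ⟨g, p, hg, hp, hvval⟩ : ∃ g p, g < k ∧ p < 2*m+1 ∧ v.val = g*(2*m+1)+p := by
    refine ⟨v.val/(2*m+1), v.val%(2*m+1), ?_, Nat.mod_lt _ (by omega), ?_⟩
    · exact (Nat.div_lt_iff_lt_mul (by omega)).2 hv
    · exact (Nat.div_add_mod' _ _).symm
  have hvcode : v = ⟨g*(2*m+1)+p, by have := code_lt hg hp; omega⟩ := Fin.ext hvval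
  have key : ∀ t : Finset (Fin (k*(2*m+1)+1)), t ⊆ (GG m k).neighborFinset v →
      m+1 ≤ t.card → m+1 ≤ (GG m k).degree v := by
    intro t ht hc
    exact hc.trans (Finset.card_le_card ht)
  have hfA : ∀ j : ℕ, m + min j (m-1) < 2*m+1 := by intro j; omega
  have hfB : ∀ j : ℕ, min j (m-1) < 2*m+1 := by intro j; omega
  rcases lt_or_ge p m with hpm | hpm
  · -- B vertex: neighbors = A block plus another B vertex
    have hq0 : (if p = 0 then 1 else 0) < m ∧ (if p = 0 then 1 else 0) ≠ p := by
      split <;> omega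
    set q0 : ℕ := if p = 0 then 1 else 0 with hq0def
    refine key (((range m).image (fun j =>
        (⟨g*(2*m+1) + (m + min j (m-1)), by have := code_lt hg (hfA j); omega⟩ :
          Fin (k*(2*m+1)+1)))) ∪
        {⟨g*(2*m+1) + q0, by have := code_lt hg (show q0 < 2*m+1 by omega); omega⟩}) ?_ ?_
    · intro w hw
      rw [SimpleGraph.mem_neighborFinset, hvcode]
      simp only [Finset.mem_union, Finset.mem_image, Finset.mem_range,
        Finset.mem_singleton] at hw
      rcases hw with ⟨j, hj, rfl⟩ | rfl
      · exact adj_code hg hp (hfA j) (by omega) (Or.inl ⟨hpm, by omega⟩)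
      · exact adj_code hg hp (by omega) (by omega) (Or.inl ⟨hpm, by omega⟩)
    · rw [Finset.card_union_of_disjoint, Finset.card_image_of_injOn, Finset.card_range,
        Finset.card_singleton]
      · intro a ha b hb hab
        simp only [Finset.coe_range, Set.mem_Iio] at ha hb
        simp only [Fin.mk.injEq] at hab; omega
      · simp only [Finset.disjoint_singleton_right, Finset.mem_image, Finset.mem_range]
        rintro ⟨j, hj, hj2⟩
        simp only [Fin.mk.injEq] at hj2; omega
  rcases lt_or_ge p (2*m) with hpm2 | hpm2
  · -- A vertex: neighbors = B block plus apex
    refine key (((range m).image (fun j =>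
        (⟨g*(2*m+1) + min j (m-1), by have := code_lt hg (hfB j); omega⟩ :
          Fin (k*(2*m+1)+1)))) ∪
        {⟨g*(2*m+1) + 2*m, by have := code_lt hg (show 2*m < 2*m+1 by omega); omega⟩}) ?_ ?_
    · intro w hw
      rw [SimpleGraph.mem_neighborFinset, hvcode]
      simp only [Finset.mem_union, Finset.mem_image, Finset.mem_range,
        Finset.mem_singleton] at hw
      rcases hw with ⟨j, hj, rfl⟩ | rfl
      · exact adj_code hg hp (hfB j) (by omega) (Or.inr (Or.inl ⟨by omega, by omega⟩))
      · exact adj_code hg hp (by omega) (by omega)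
          (Or.inr (Or.inr (Or.inr ⟨rfl, hpm, hpm2⟩)))
    · rw [Finset.card_union_of_disjoint, Finset.card_image_of_injOn, Finset.card_range,
        Finset.card_singleton]
      · intro a ha b hb hab
        simp only [Finset.coe_range, Set.mem_Iio] at ha hb
        simp only [Fin.mk.injEq] at hab; omega
      · simp only [Finset.disjoint_singleton_right, Finset.mem_image, Finset.mem_range]
        rintro ⟨j, hj, hj2⟩
        simp only [Fin.mk.injEq] at hj2; omega
  · -- apex: neighbors = A block plus hub
    have hp2m : p = 2*m := by omega
    subst hp2m
    refine key (((range m).image (fun j =>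
        (⟨g*(2*m+1) + (m + min j (m-1)), by have := code_lt hg (hfA j); omega⟩ :
          Fin (k*(2*m+1)+1)))) ∪
        {⟨k*(2*m+1), by omega⟩}) ?_ ?_
    · intro w hw
      rw [SimpleGraph.mem_neighborFinset, hvcode]
      simp only [Finset.mem_union, Finset.mem_image, Finset.mem_range,
        Finset.mem_singleton] at hw
      rcases hw with ⟨j, hj, rfl⟩ | rfl
      · exact adj_code hg hp (hfA j) (by omega)
          (Or.inr (Or.inr (Or.inl ⟨rfl, by omega, by omega⟩)))
      · exact (adj_hub hg).symm
    · rw [Finset.card_union_of_disjoint, Finset.card_image_of_injOn, Finset.card_range,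
        Finset.card_singleton]
      · intro a ha b hb hab
        simp only [Finset.coe_range, Set.mem_Iio] at ha hb
        simp only [Fin.mk.injEq] at hab; omega
      · simp only [Finset.disjoint_singleton_right, Finset.mem_image, Finset.mem_range]
        rintro ⟨j, hj, hj2⟩
        have := code_lt hg (hfA j)
        simp only [Fin.mk.injEq] at hj2; omega
end deg

section conn
variable {m k : ℕ}

lemma GG_connected (hm : 1 ≤ m) : (GG m k).Connected := by
  rw [SimpleGraph.connected_iff]
  refine ⟨?_, ⟨⟨k*(2*m+1), by omega⟩⟩⟩
  intro x y
  suffices h : ∀ z : Fin (k*(2*m+1)+1), (GG m k).Reachable z ⟨k*(2*m+1), by omega⟩ by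
    exact (h x).trans (h y).symm
  intro z
  rcases eq_or_lt_of_le (Nat.lt_succ_iff.mp z.isLt) with hz | hz
  · have : z = ⟨k*(2*m+1), by omega⟩ := Fin.ext hz
    rw [this]
  · obtain ⟨g, p, hg, hp, hvval⟩ : ∃ g p, g < k ∧ p < 2*m+1 ∧ z.val = g*(2*m+1)+p := by
      refine ⟨z.val/(2*m+1), z.val%(2*m+1), ?_, Nat.mod_lt _ (by omega), ?_⟩
      · exact (Nat.div_lt_iff_lt_mul (by omega)).2 hz
      · exact (Nat.div_add_mod' _ _).symm
    have hvcode : z = ⟨g*(2*m+1)+p, by have := code_lt hg hp; omega⟩ := Fin.ext hvval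
    have hu : (GG m k).Reachable
        ⟨g*(2*m+1)+2*m, by have := code_lt hg (by omega : 2*m < 2*m+1); omega⟩
        ⟨k*(2*m+1), by omega⟩ := (adj_hub hg).symm.reachable
    rcases lt_or_ge p m with hpm | hpm
    · -- B vertex: go through an A vertex
      have h1 := adj_code (q := m) hg hp (by omega) (by omega) (Or.inl ⟨hpm, by omega⟩)
      have h2 := adj_code (p := m) (q := 2*m) hg (by omega) (by omega) (by omega)
        (Or.inr (Or.inr (Or.inr ⟨rfl, le_refl m, by omega⟩)))
      rw [hvcode]
      exact (h1.reachable.trans h2.reachable).trans hu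
    rcases lt_or_ge p (2*m) with hpm2 | hpm2
    · have h1 := adj_code (q := 2*m) hg hp (by omega) (by omega)
        (Or.inr (Or.inr (Or.inr ⟨rfl, hpm, hpm2⟩)))
      rw [hvcode]
      exact h1.reachable.trans hu
    · have hp2m : p = 2*m := by omega
      subst hp2m
      rw [hvcode]
      exact hu
end conn

section key
variable {m k : ℕ} {ρ : ℝ}

/-- every contagious set contains at least two vertices of each gadget -/
lemma gadget_two (hm : 3 ≤ m) (hρ : 1 < ρ*(m+1)) {S : Finset (Fin (k*(2*m+1)+1))}
    (hS : Contagious (GG m k) (fun v => ρ * ((GG m k).degree v : ℝ)) S) {g : ℕ}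
    (hg : g < k) :
    2 ≤ (S.filter (fun w => w.val < k*(2*m+1) ∧ w.val/(2*m+1) = g)).card := by
  classical
  set G := GG m k with hG
  set φ : Fin (k*(2*m+1)+1) → ℝ := fun v => ρ * ((GG m k).degree v : ℝ) with hφ
  by_contra hcard
  push_neg at hcard
  set Sg := S.filter (fun w => w.val < k*(2*m+1) ∧ w.val/(2*m+1) = g) with hSg
  have hρ0 : 0 < ρ := by nlinarith [hρ, (by positivity : (0:ℝ) ≤ (m:ℝ)+1)]
  -- threshold exceeds 1 on gadget vertices
  have hφgt : ∀ w : Fin (k*(2*m+1)+1), w.val < k*(2*m+1) → 1 < φ w := by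
    intro w hw
    have hdeg := deg_ge (by omega) hw
    have : (m:ℝ)+1 ≤ ((GG m k).degree w : ℝ) := by exact_mod_cast hdeg
    calc (1:ℝ) < ρ*(m+1) := hρ
    _ ≤ ρ * ((GG m k).degree w : ℝ) := by nlinarith
  -- if a vertex enters by the filter, it has at least 2 infected neighbors
  have htwo : ∀ (I : Finset (Fin (k*(2*m+1)+1))) (w : Fin (k*(2*m+1)+1)),
      w.val < k*(2*m+1) → φ w ≤ ((I.filter fun u => G.Adj w u).card : ℝ) →
      2 ≤ (I.filter fun u => G.Adj w u).card := by
    intro I w hw hle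
    have h1 := hφgt w hw
    by_contra hc
    push_neg at hc
    have h2 : (((I.filter fun u => G.Adj w u).card : ℕ) : ℝ) ≤ 1 := by
      exact_mod_cast Nat.lt_succ_iff.mp hc
    linarith
  -- the apex of gadget g
  set ub : Fin (k*(2*m+1)+1) :=
    ⟨g*(2*m+1)+2*m, by have := code_lt hg (by omega : 2*m < 2*m+1); omega⟩ with hubdef
  have hubval : ub.val = g*(2*m+1)+2*m := rfl
  have hub1 : ub.val < k*(2*m+1) := code_lt hg (by omega)
  have hubmod : ub.val % (2*m+1) = 2*m := code_mod (by omega)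
  have hubdiv : ub.val / (2*m+1) = g := code_div (by omega)
  set Inv : Finset (Fin (k*(2*m+1)+1)) → Prop := fun I =>
    (∀ w ∈ I, w.val < k*(2*m+1) → w.val/(2*m+1) = g → w.val%(2*m+1) < 2*m → w ∈ S) ∧
    (ub ∈ I → ub ∈ S ∨ ∃ a ∈ S, a.val < k*(2*m+1) ∧ a.val/(2*m+1) = g ∧
      m ≤ a.val%(2*m+1) ∧ a.val%(2*m+1) < 2*m) with hInv
  have hbase : Inv S := ⟨fun w hw _ _ _ => hw, fun h => Or.inl h⟩
  have hstep : ∀ I, Inv I → Inv (percStep G φ I) := by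
    intro I hI
    constructor
    · intro w hw hw1 hw2 hw3
      simp only [percStep, Finset.mem_union, Finset.mem_filter, Finset.mem_univ,
        true_and] at hw
      rcases hw with hw | hw
      · exact hI.1 w hw hw1 hw2 hw3
      · exfalso
        have hcnt := htwo I w hw1 hw
        rcases lt_or_ge (w.val % (2*m+1)) m with hpm | hpm
        · -- B vertex: all neighbors are gadget vertices of position < 2m
          have hsub : I.filter (fun u => G.Adj w u) ⊆ Sg := by
            intro x hx
            rw [Finset.mem_filter] at hx
            rcases adj_struct hw1 hx.2 with ⟨_, h2⟩ | ⟨h1, h2, h3⟩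
            · omega
            · have hx2m : x.val % (2*m+1) < 2*m := by
                unfold pairRel at h3
                rcases h3 with h|h|h|h <;> omega
              rw [hSg, Finset.mem_filter]
              exact ⟨hI.1 x hx.1 h1 (by rw [h2, hw2]) hx2m, h1, by rw [h2, hw2]⟩
          have := Finset.card_le_card hsub
          omega
        · -- A vertex: neighbors have position < m or are the apex
          have hnb : ∀ x ∈ I.filter (fun u => G.Adj w u),
              (x.val % (2*m+1) < m ∧ x.val < k*(2*m+1) ∧ x.val/(2*m+1) = g) ∨ x = ub := by
            intro x hx
            rw [Finset.mem_filter] at hx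
            rcases adj_struct hw1 hx.2 with ⟨_, h2⟩ | ⟨h1, h2, h3⟩
            · omega
            · have hdivg : x.val/(2*m+1) = g := by rw [h2, hw2]
              have hcase : x.val % (2*m+1) < m ∨ x.val % (2*m+1) = 2*m := by
                unfold pairRel at h3
                rcases h3 with h|h|h|h <;> omega
              rcases hcase with h | h
              · exact Or.inl ⟨h, h1, hdivg⟩
              · right
                apply Fin.ext
                have hda := Nat.div_add_mod' x.val (2*m+1)
                rw [hdivg] at hda
                rw [hubval]; omega
          have hbig : (∃ e ∈ Sg, m ≤ e.val % (2*m+1)) →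
              I.filter (fun u => G.Adj w u) ⊆ {ub} := by
            rintro ⟨e, heSg, hem⟩ x hx
            rcases hnb x hx with ⟨hxm, hx1, hx2⟩ | rfl
            · exfalso
              have hxS : x ∈ Sg := by
                rw [hSg, Finset.mem_filter]
                exact ⟨hI.1 x (Finset.mem_filter.1 hx).1 hx1 hx2 (by omega), hx1, hx2⟩
              have hne : x ≠ e := by
                intro h; rw [h] at hxm; omega
              have := Finset.one_lt_card.2 ⟨x, hxS, e, heSg, hne⟩
              omega
            · exact Finset.mem_singleton_self _
          by_cases hu : ub ∈ I
          · rcases hI.2 hu with huS | ⟨a, haS, ha1, ha2, ha3, ha4⟩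
            · have hsub := hbig ⟨ub, by
                rw [hSg, Finset.mem_filter]; exact ⟨huS, hub1, hubdiv⟩, by omega⟩
              have := Finset.card_le_card hsub
              simp only [Finset.card_singleton] at this
              omega
            · have hsub := hbig ⟨a, by
                rw [hSg, Finset.mem_filter]; exact ⟨haS, ha1, ha2⟩, ha3⟩
              have := Finset.card_le_card hsub
              simp only [Finset.card_singleton] at this
              omega
          · have hsub : I.filter (fun u => G.Adj w u) ⊆ Sg := by
              intro x hx
              rcases hnb x hx with ⟨hxm, hx1, hx2⟩ | rfl
              · rw [hSg, Finset.mem_filter]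
                exact ⟨hI.1 x (Finset.mem_filter.1 hx).1 hx1 hx2 (by omega), hx1, hx2⟩
              · exact absurd (Finset.mem_filter.1 hx).1 hu
            have := Finset.card_le_card hsub
            omega
    · intro hu'
      simp only [percStep, Finset.mem_union, Finset.mem_filter, Finset.mem_univ,
        true_and] at hu'
      rcases hu' with hu | hu
      · exact hI.2 hu
      · have hcnt := htwo I ub hub1 hu
        have hnotsub : ¬ (I.filter (fun u => G.Adj ub u) ⊆
            {(⟨k*(2*m+1), by omega⟩ : Fin (k*(2*m+1)+1))}) := by
          intro hsub
          have := Finset.card_le_card hsub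
          simp only [Finset.card_singleton] at this
          omega
        obtain ⟨x, hx, hxs⟩ := Finset.not_subset.1 hnotsub
        rw [Finset.mem_filter] at hx
        rcases adj_struct hub1 hx.2 with ⟨h1, _⟩ | ⟨h1, h2, h3⟩
        · exact absurd (Finset.mem_singleton.2 (Fin.ext h1)) hxs
        · have hq : m ≤ x.val % (2*m+1) ∧ x.val % (2*m+1) < 2*m := by
            unfold pairRel at h3
            rcases h3 with h|h|h|h <;> omega
          exact Or.inr ⟨x, hI.1 x hx.1 h1 (by rw [h2, hubdiv]) hq.2, h1,
            by rw [h2, hubdiv], hq.1, hq.2⟩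
  have hiter : ∀ j, Inv ((percStep G φ)^[j] S) := by
    intro j
    induction j with
    | zero => simpa using hbase
    | succ n ih => rw [Function.iterate_succ_apply']; exact hstep _ ih
  obtain ⟨j, hj⟩ := hS
  have huniv : Inv (Finset.univ : Finset (Fin (k*(2*m+1)+1))) := by
    rw [← hj]; exact hiter j
  have h0 : (⟨g*(2*m+1)+0, by have := code_lt hg (by omega : 0 < 2*m+1); omega⟩ :
      Fin (k*(2*m+1)+1)) ∈ Sg := by
    rw [hSg, Finset.mem_filter]
    refine ⟨huniv.1 _ (Finset.mem_univ _) (code_lt hg (by omega))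
      (code_div (by omega)) (by rw [code_mod (by omega)]; omega),
      code_lt hg (by omega), code_div (by omega)⟩
  have h1 : (⟨g*(2*m+1)+1, by have := code_lt hg (by omega : 1 < 2*m+1); omega⟩ :
      Fin (k*(2*m+1)+1)) ∈ Sg := by
    rw [hSg, Finset.mem_filter]
    refine ⟨huniv.1 _ (Finset.mem_univ _) (code_lt hg (by omega))
      (code_div (by omega)) (by rw [code_mod (by omega)]; omega),
      code_lt hg (by omega), code_div (by omega)⟩
  have hne01 : (⟨g*(2*m+1)+0, by have := code_lt hg (by omega : 0 < 2*m+1); omega⟩ :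
      Fin (k*(2*m+1)+1)) ≠ ⟨g*(2*m+1)+1, by have := code_lt hg (by omega : 1 < 2*m+1); omega⟩ := by
    simp only [Ne, Fin.mk.injEq]; omega
  have := Finset.one_lt_card.2 ⟨_, h0, _, h1, hne01⟩
  omega
end key

section agg
variable {m k : ℕ} {ρ : ℝ}

lemma contagious_card_ge (hm : 3 ≤ m) (hρ : 1 < ρ*(m+1))
    {S : Finset (Fin (k*(2*m+1)+1))}
    (hS : Contagious (GG m k) (fun v => ρ * ((GG m k).degree v : ℝ)) S) :
    2*k ≤ S.card := by
  classical
  have hdisj : ∀ g₁ ∈ Finset.range k, ∀ g₂ ∈ Finset.range k, g₁ ≠ g₂ →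
      Disjoint (S.filter (fun w => w.val < k*(2*m+1) ∧ w.val/(2*m+1) = g₁))
        (S.filter (fun w => w.val < k*(2*m+1) ∧ w.val/(2*m+1) = g₂)) := by
    intro g₁ _ g₂ _ hne
    rw [Finset.disjoint_left]
    intro x hx1 hx2
    rw [Finset.mem_filter] at hx1 hx2
    exact hne (hx1.2.2 ▸ hx2.2.2 ▸ rfl)
  calc 2*k = ∑ _g ∈ Finset.range k, 2 := by simp [Nat.mul_comm]
  _ ≤ ∑ g ∈ Finset.range k,
      (S.filter (fun w => w.val < k*(2*m+1) ∧ w.val/(2*m+1) = g)).card := by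
      refine Finset.sum_le_sum ?_
      intro g hgr
      exact gadget_two hm hρ hS (Finset.mem_range.1 hgr)
  _ = ((Finset.range k).biUnion
      (fun g => S.filter (fun w => w.val < k*(2*m+1) ∧ w.val/(2*m+1) = g))).card :=
      (Finset.card_biUnion hdisj).symm
  _ ≤ S.card := Finset.card_le_card (Finset.biUnion_subset.2
      (fun g _ => Finset.filter_subset _ _))

lemma minContagious_ge (hm : 3 ≤ m) (hρ : 1 < ρ*(m+1)) :
    2*k ≤ minContagious (GG m k) ρ := by
  classical
  apply le_csInf
  · exact ⟨(Finset.univ : Finset (Fin (k*(2*m+1)+1))).card, Finset.univ, rfl, 0, rfl⟩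
  · rintro b ⟨A, rfl, hA⟩
    exact contagious_card_ge hm hρ hA
end agg

/-- Proposition 2: for every `ρ ∈ (0, 1/3)` with `1/ρ - ⌊1/ρ⌋ > 1/2`
there exists `ε > 0` such that for every `N₀` there is a connected graph `G` of order
`n ≥ N₀` with `h_ρ(G) > (1 + ε)ρn`. -/
theorem exists_arbitrarily_large_graph_min_contagious_gt (ρ : ℝ) (h₀ : 0 < ρ)
    (h₁ : ρ < 1 / 3) (hfrac : 1 / 2 < 1 / ρ - (⌊1 / ρ⌋₊ : ℝ)) :
    ∃ ε : ℝ, 0 < ε ∧ ∀ N₀ : ℕ, ∃ (n : ℕ) (G : SimpleGraph (Fin n)),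
      G.Connected ∧ N₀ ≤ n ∧ (1 + ε) * ρ * (n : ℝ) < (minContagious G ρ : ℝ) := by
  set m := ⌊1/ρ⌋₊ with hmdef
  have hρ0 : (0:ℝ) < 1/ρ := by positivity
  have hm1 : (m:ℝ) ≤ 1/ρ := Nat.floor_le hρ0.le
  have hm2 : 1/ρ < (m:ℝ)+1 := Nat.lt_floor_add_one _
  have h3ρ : (3:ℝ) < 1/ρ := by rw [lt_div_iff₀ h₀]; linarith
  have hm3 : 3 ≤ m := by
    have h2m : 2 < m := by exact_mod_cast (show (2:ℝ) < (m:ℝ) by linarith)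
    omega
  have hρm1 : 1 < ρ*((m:ℝ)+1) := by
    have := (div_lt_iff₀ h₀).1 hm2
    linarith
  have hmhalf : (m:ℝ) + 1/2 < 1/ρ := by linarith [hfrac]
  set δ : ℝ := 2 - ρ*(2*(m:ℝ)+1) with hδdef
  have hδ : 0 < δ := by
    have := (lt_div_iff₀ h₀).1 hmhalf
    rw [hδdef]; nlinarith
  have hδ2 : δ < 2 := by
    have : 0 < ρ*(2*(m:ℝ)+1) := by positivity
    rw [hδdef]; linarith
  refine ⟨δ/4, by positivity, ?_⟩
  intro N₀
  set k := max N₀ (⌈1/δ⌉₊ + 1) with hkdef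
  have hk1 : 1 ≤ k := le_trans (by omega) (le_max_right _ _)
  have hkN : N₀ ≤ k := le_max_left _ _
  have hkδ : 1/δ < (k:ℝ) := by
    have h1 : 1/δ ≤ (⌈1/δ⌉₊ : ℝ) := Nat.le_ceil _
    have h2 : (⌈1/δ⌉₊ + 1 : ℕ) ≤ k := le_max_right _ _
    have h3 : ((⌈1/δ⌉₊ + 1 : ℕ) : ℝ) ≤ (k:ℝ) := by exact_mod_cast h2
    push_cast at h3
    linarith
  have hδk : 1 < δ*(k:ℝ) := by
    rw [div_lt_iff₀ hδ] at hkδ; nlinarith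
  refine ⟨k*(2*m+1)+1, GG m k, GG_connected (by omega), ?_, ?_⟩
  · calc N₀ ≤ k := hkN
    _ = k*1 := (Nat.mul_one k).symm
    _ ≤ k*(2*m+1) := Nat.mul_le_mul_left k (by omega)
    _ ≤ k*(2*m+1)+1 := by omega
  · have h2k := minContagious_ge (m := m) (k := k) (ρ := ρ) hm3 hρm1
    have hcast : ((2*k : ℕ) : ℝ) ≤ (minContagious (GG m k) ρ : ℝ) := by exact_mod_cast h2k
    push_cast at hcast
    have hn : ((k*(2*m+1)+1 : ℕ) : ℝ) = (k:ℝ)*(2*(m:ℝ)+1)+1 := by push_cast; ring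
    rw [hn]
    have hsub : ρ*((k:ℝ)*(2*(m:ℝ)+1)+1) = (2-δ)*(k:ℝ) + ρ := by rw [hδdef]; ring
    have hk0 : (0:ℝ) < (k:ℝ) := by exact_mod_cast hk1
    have e1 : (1+δ/4)*ρ*((k:ℝ)*(2*(m:ℝ)+1)+1) = (1+δ/4)*((2-δ)*(k:ℝ)+ρ) := by
      rw [mul_assoc, hsub]
    have e2 : (1+δ/4)*((2-δ)*(k:ℝ)+ρ) < 2*(k:ℝ) := by
      nlinarith [mul_nonneg (show (0:ℝ) ≤ 1/3-ρ by linarith) hδ.le,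
        mul_nonneg (mul_nonneg hδ.le hδ.le) hk0.le, hδk]
    linarith [hcast, e1.le, e2]
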